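/- There exists a constant C > 0 such that for all integers k ≥ 1 and l ≥ 2: φ_{k,l} ≤ C · (27/2)^k · 9^l · (1 + 2l/(3k))^{2l+3k} · k^{−5/2} · √l. -/

import Mathlib

open Real Stirling Nat

/-- `phi n m` is the number of rooted triangulations without self-loops of a disc with
`m` boundary vertices and `n` internal vertices (as a real number). -/
noncomputable def phi (n m : ℕ) : ℝ :=
  ((2:ℝ) ^ (n + 1) * (Nat.factorial (2 * (m - 2) + 1) : ℝ) *
      (Nat.factorial (2 * (m - 2) + 3 * n) : ℝ)) /
    (((Nat.factorial (m - 2) : ℝ)) ^ 2 * (Nat.factorial n : ℝ) *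
      (Nat.factorial (2 * (m - 2) + 2 * n + 2) : ℝ))

lemma fact_upper (n : ℕ) (hn : 1 ≤ n) :
    (n ! : ℝ) ≤ (Real.exp 1 / Real.sqrt 2) * (Real.sqrt (2*n) * ((n:ℝ) / Real.exp 1)^n) := by
  obtain ⟨m, rfl⟩ := Nat.exists_eq_add_of_le hn
  have h1 : stirlingSeq (1 + m) ≤ stirlingSeq 1 := by
    have := stirlingSeq'_antitone (Nat.zero_le m)
    simpa [Function.comp, Nat.succ_eq_add_one, Nat.add_comm] using this
  rw [stirlingSeq_one] at h1
  have hpos : 0 < Real.sqrt (2*(1+m:ℕ)) * (((1+m:ℕ):ℝ) / Real.exp 1)^(1+m) := by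
    positivity
  have h2 : ((1+m : ℕ)! : ℝ) / (Real.sqrt (2*(1+m:ℕ)) * (((1+m:ℕ):ℝ) / Real.exp 1)^(1+m))
      ≤ Real.exp 1 / Real.sqrt 2 := h1
  exact (div_le_iff₀ hpos).mp h2

lemma fact_lower (n : ℕ) (hn : 1 ≤ n) :
    Real.sqrt π * (Real.sqrt (2*n) * ((n:ℝ) / Real.exp 1)^n) ≤ (n ! : ℝ) := by
  obtain ⟨m, rfl⟩ := Nat.exists_eq_add_of_le hn
  have ht : Filter.Tendsto (stirlingSeq ∘ Nat.succ) Filter.atTop (nhds (Real.sqrt π)) :=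
    tendsto_stirlingSeq_sqrt_pi.comp (Filter.tendsto_add_atTop_nat 1)
  have h1 : Real.sqrt π ≤ stirlingSeq (1 + m) := by
    have := stirlingSeq'_antitone.le_of_tendsto ht m
    simpa [Function.comp, Nat.succ_eq_add_one, Nat.add_comm] using this
  have hpos : 0 < Real.sqrt (2*(1+m:ℕ)) * (((1+m:ℕ):ℝ) / Real.exp 1)^(1+m) := by
    positivity
  have h2 : Real.sqrt π ≤ ((1+m : ℕ)! : ℝ) / (Real.sqrt (2*(1+m:ℕ)) * (((1+m:ℕ):ℝ) / Real.exp 1)^(1+m)) := h1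
  exact (le_div_iff₀ hpos).mp h2

lemma choose_bound (k c : ℕ) (hk : 1 ≤ k) (hc : 1 ≤ c) :
    ((k+c).choose k : ℝ) ≤
      Real.sqrt (k+c) / (Real.sqrt k * Real.sqrt c) * (((k:ℝ)+c)^(k+c) / ((k:ℝ)^k * (c:ℝ)^c)) := by
  have hkc : (1:ℕ) ≤ k + c := le_trans hk (Nat.le_add_right _ _)
  have hfact : ((k+c).choose k : ℝ) = ((k+c)! : ℝ) / ((k ! : ℝ) * (c ! : ℝ)) := by
    rw [eq_div_iff (by positivity)]
    have := Nat.add_choose_mul_factorial_mul_factorial (i := c) (j := k)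
    rw [Nat.add_comm c k] at this
    push_cast [← this]
    ring
  rw [hfact]
  have h1 : ((k+c)! : ℝ) ≤ (Real.exp 1 / Real.sqrt 2) * (Real.sqrt (2*(k+c)) * (((k+c:ℕ):ℝ) / Real.exp 1)^(k+c)) := by
    have := fact_upper (k+c) hkc
    push_cast at this ⊢
    exact this
  have h2 : Real.sqrt π * (Real.sqrt (2*k) * ((k:ℝ) / Real.exp 1)^k) ≤ (k ! : ℝ) := fact_lower _ hk
  have h3 : Real.sqrt π * (Real.sqrt (2*c) * ((c:ℝ) / Real.exp 1)^c) ≤ (c ! : ℝ) := fact_lower _ hc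
  have hdpos : 0 < (Real.sqrt π * (Real.sqrt (2*k) * ((k:ℝ) / Real.exp 1)^k)) *
      (Real.sqrt π * (Real.sqrt (2*c) * ((c:ℝ) / Real.exp 1)^c)) := by
    have : (0:ℝ) < k := by exact_mod_cast hk
    have : (0:ℝ) < c := by exact_mod_cast hc
    positivity
  have step : ((k+c)! : ℝ) / ((k ! : ℝ) * (c ! : ℝ)) ≤
      ((Real.exp 1 / Real.sqrt 2) * (Real.sqrt (2*(k+c)) * (((k+c:ℕ):ℝ) / Real.exp 1)^(k+c))) /
      ((Real.sqrt π * (Real.sqrt (2*k) * ((k:ℝ) / Real.exp 1)^k)) *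
       (Real.sqrt π * (Real.sqrt (2*c) * ((c:ℝ) / Real.exp 1)^c))) := by
    apply div_le_div₀ (by positivity) h1 hdpos (mul_le_mul h2 h3 (le_of_lt (by
      have : (0:ℝ) < c := by exact_mod_cast hc
      positivity)) (Nat.cast_nonneg _))
  refine step.trans ?_
  have hK : (0:ℝ) < k := by exact_mod_cast hk
  have hC : (0:ℝ) < c := by exact_mod_cast hc
  have heq : ((Real.exp 1 / Real.sqrt 2) * (Real.sqrt (2*(k+c)) * (((k+c:ℕ):ℝ) / Real.exp 1)^(k+c))) /
      ((Real.sqrt π * (Real.sqrt (2*k) * ((k:ℝ) / Real.exp 1)^k)) *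
       (Real.sqrt π * (Real.sqrt (2*c) * ((c:ℝ) / Real.exp 1)^c))) =
      (Real.exp 1 / (2*π)) * (Real.sqrt (k+c) / (Real.sqrt k * Real.sqrt c) *
        (((k:ℝ)+c)^(k+c) / ((k:ℝ)^k * (c:ℝ)^c))) := by
    have e1 : Real.sqrt (2*(k+c):ℝ) = Real.sqrt 2 * Real.sqrt ((k:ℝ)+c) := by
      rw [← Real.sqrt_mul (by norm_num)]
    have e2 : Real.sqrt (2*k:ℝ) = Real.sqrt 2 * Real.sqrt (k:ℝ) := by
      rw [← Real.sqrt_mul (by norm_num)]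
    have e3 : Real.sqrt (2*c:ℝ) = Real.sqrt 2 * Real.sqrt (c:ℝ) := by
      rw [← Real.sqrt_mul (by norm_num)]
    have e4 : Real.sqrt π * Real.sqrt π = π := Real.mul_self_sqrt pi_pos.le
    have e5 : Real.sqrt 2 * Real.sqrt 2 = 2 := Real.mul_self_sqrt (by norm_num)
    rw [div_pow, div_pow, div_pow]
    rw [e1, e2, e3]
    push_cast
    rw [pow_add (Real.exp 1)]
    have q2 : Real.sqrt 2 ≠ 0 := by positivity
    have qπ : Real.sqrt π ≠ 0 := by positivity
    have qk : Real.sqrt (k:ℝ) ≠ 0 := (Real.sqrt_pos.mpr hK).ne'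
    have qc : Real.sqrt (c:ℝ) ≠ 0 := (Real.sqrt_pos.mpr hC).ne'
    have qe : Real.exp 1 ≠ 0 := (Real.exp_pos 1).ne'
    have qkk : (k:ℝ)^k ≠ 0 := by positivity
    have qcc : (c:ℝ)^c ≠ 0 := by positivity
    field_simp
    ring_nf
    have e6 : Real.sqrt 2 ^ 3 = 2 * Real.sqrt 2 := by
      rw [pow_succ, Real.sq_sqrt (by norm_num : (0:ℝ) ≤ 2)]
    have e7 : Real.sqrt π ^ 2 = π := Real.sq_sqrt pi_pos.le
    rw [Real.sq_sqrt (by norm_num : (0:ℝ) ≤ 2), e7]; ring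
  rw [heq]
  have hA : 0 ≤ Real.sqrt ((k:ℝ)+c) / (Real.sqrt k * Real.sqrt c) *
      (((k:ℝ)+c)^(k+c) / ((k:ℝ)^k * (c:ℝ)^c)) := by positivity
  have he : Real.exp 1 / (2*π) ≤ 1 := by
    rw [div_le_one (by positivity)]
    have h1 := Real.exp_one_lt_d9
    have h2 := Real.pi_gt_three
    nlinarith
  push_cast
  calc Real.exp 1 / (2*π) * (Real.sqrt ((k:ℝ)+c) / (Real.sqrt k * Real.sqrt c) *
        (((k:ℝ)+c)^(k+c) / ((k:ℝ)^k * (c:ℝ)^c)))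
      ≤ 1 * (Real.sqrt ((k:ℝ)+c) / (Real.sqrt k * Real.sqrt c) *
        (((k:ℝ)+c)^(k+c) / ((k:ℝ)^k * (c:ℝ)^c))) := by
        exact mul_le_mul_of_nonneg_right he hA
    _ = _ := by rw [one_mul]

lemma phi_eq (k a l : ℕ) (hl : l = a + 2) :
    phi k l = ((2:ℝ)^(k+1) * (2*(a:ℝ)+1) * ((2*a).choose a : ℝ) * ((2*a+3*k).choose k : ℝ)) /
      ((2*(a:ℝ)+2*(k:ℝ)+1) * (2*(a:ℝ)+2*(k:ℝ)+2)) := by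
  subst hl
  unfold phi
  have hm : a + 2 - 2 = a := by omega
  rw [hm]
  have h1 : ((2*a+1)! : ℝ) = (2*(a:ℝ)+1) * ((2*a).choose a : ℝ) * (a ! : ℝ) * (a ! : ℝ) := by
    have e : (a + a).choose a * a ! * a ! = (a + a)! := Nat.add_choose_mul_factorial_mul_factorial a a
    have e2 : (2*a)! = (2*a).choose a * a ! * a ! := by
      rw [two_mul a]; exact e.symm
    have e3 : (2*a+1)! = (2*a+1) * (2*a)! := Nat.factorial_succ _
    rw [e3, e2]
    push_cast
    ring
  have h2 : ((2*a+3*k)! : ℝ) = ((2*a+3*k).choose k : ℝ) * (k ! : ℝ) * ((2*a+2*k)! : ℝ) := by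
    have e : (2*a+2*k + k).choose k * (2*a+2*k)! * k ! = (2*a+2*k+k)! :=
      Nat.add_choose_mul_factorial_mul_factorial (2*a+2*k) k
    have e2 : 2*a+2*k+k = 2*a+3*k := by omega
    rw [e2] at e
    rw [← e]
    push_cast
    ring
  have h3 : ((2*a+2*k+2)! : ℝ) = (2*(a:ℝ)+2*(k:ℝ)+2) * (2*(a:ℝ)+2*(k:ℝ)+1) * ((2*a+2*k)! : ℝ) := by
    have e : (2*a+2*k+2)! = (2*a+2*k+2) * ((2*a+2*k+1) * (2*a+2*k)!) := by
      rw [Nat.factorial_succ, Nat.factorial_succ]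
    rw [e]
    push_cast
    ring
  rw [h1, h2, h3]
  have q1 : (a ! : ℝ) ≠ 0 := Nat.cast_ne_zero.mpr (Nat.factorial_ne_zero _)
  have q2 : (k ! : ℝ) ≠ 0 := Nat.cast_ne_zero.mpr (Nat.factorial_ne_zero _)
  have q3 : ((2*a+2*k)! : ℝ) ≠ 0 := Nat.cast_ne_zero.mpr (Nat.factorial_ne_zero _)
  have q4 : (2*(a:ℝ)+2*(k:ℝ)+1) ≠ 0 := by positivity
  have q5 : (2*(a:ℝ)+2*(k:ℝ)+2) ≠ 0 := by positivity
  field_simp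

set_option maxHeartbeats 1000000 in
theorem phi_upper_bound :
    ∃ C : ℝ, 0 < C ∧ ∀ k : ℕ, 1 ≤ k → ∀ l : ℕ, 2 ≤ l →
      phi k l ≤
        C * (27 / 2 : ℝ) ^ k * (9 : ℝ) ^ l *
          (1 + 2 * (l : ℝ) / (3 * (k : ℝ))) ^ (2 * l + 3 * k) *
          ((k : ℝ) ^ ((5 : ℝ) / 2))⁻¹ * Real.sqrt l := by
  refine ⟨100, by norm_num, ?_⟩
  intro k hk l hl
  set a := l - 2 with ha
  have hla : l = a + 2 := by omega
  rw [phi_eq k a l hla, show 2*l+3*k = 3*k+2*l from by ring]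
  set K := (k:ℝ) with hKdef
  set L := (l:ℝ) with hLdef
  set A := (a:ℝ) with hAdef
  set C1 : ℝ := ((2*a).choose a : ℝ) with hC1
  set C2 : ℝ := ((2*a+3*k).choose k : ℝ) with hC2
  have hK1 : (1:ℝ) ≤ K := by rw [hKdef]; exact_mod_cast hk
  have hK0 : (0:ℝ) < K := lt_of_lt_of_le one_pos hK1
  have hL2 : (2:ℝ) ≤ L := by rw [hLdef]; exact_mod_cast hl
  have hL0 : (0:ℝ) < L := by linarith
  have hA : A = L - 2 := by rw [hAdef, hLdef, hla]; push_cast; ring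
  have hAnn : (0:ℝ) ≤ A := by rw [hAdef]; positivity
  set e : ℕ := 3*k+2*l with he
  set m2 : ℕ := 2*k+2*l with hm2
  set S : ℝ := 3*K+2*L with hS
  set Q : ℝ := 2*K+2*L with hQ
  have hS0 : 0 < S := by rw [hS]; linarith
  have hQ0 : 0 < Q := by rw [hQ]; linarith
  have hsqK : 0 < Real.sqrt K := Real.sqrt_pos.mpr hK0
  have hsqL : 0 < Real.sqrt L := Real.sqrt_pos.mpr hL0
  have hsqQ : 0 < Real.sqrt Q := Real.sqrt_pos.mpr hQ0
  have r1 : 1 + 2*L/(3*K) = S/(3*K) := by rw [hS]; field_simp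
  rw [r1]
  have r3 : K ^ ((5:ℝ)/2) = K^(2:ℕ) * Real.sqrt K := by
    rw [show (5:ℝ)/2 = (2:ℕ) + (1/2 : ℝ) by norm_num, Real.rpow_add hK0,
      Real.rpow_natCast, Real.sqrt_eq_rpow]
  rw [r3]
  have hD0 : (0:ℝ) < (2*A+2*K+1) * (2*A+2*K+2) := by positivity
  rw [div_le_iff₀ hD0]
  have hRHS : 100 * (27/2:ℝ)^k * 9^l * (S/(3*K))^e * (K^(2:ℕ)*Real.sqrt K)⁻¹ * Real.sqrt L *
      ((2*A+2*K+1)*(2*A+2*K+2))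
      = (100 * S^e * Real.sqrt L * ((2*A+2*K+1)*(2*A+2*K+2))) /
        (2^k * K^e * K^(2:ℕ) * Real.sqrt K) := by
    have p1 : ((27:ℝ)/2)^k = 27^k/2^k := div_pow _ _ _
    have p2 : (S/(3*K))^e = S^e / (27^k * 9^l * K^e) := by
      rw [div_pow, mul_pow]
      congr 1
      rw [he, pow_add, pow_mul, pow_mul]
      norm_num
    rw [p1, p2]
    have q1 : (2:ℝ)^k ≠ 0 := by positivity
    have q2 : (27:ℝ)^k ≠ 0 := by positivity
    have q3 : (9:ℝ)^l ≠ 0 := by positivity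
    have q4 : K^e ≠ 0 := by positivity
    have q5 : Real.sqrt K ≠ 0 := hsqK.ne'
    field_simp
  rw [hRHS, le_div_iff₀ (by positivity)]
  set Y : ℝ := Real.sqrt K * Real.sqrt Q * K^k * Q^m2 with hY
  have hY0 : 0 < Y := by rw [hY]; positivity
  apply le_of_mul_le_mul_right _ hY0
  have hC1nn : 0 ≤ C1 := by rw [hC1]; positivity
  have hC2nn : 0 ≤ C2 := by rw [hC2]; positivity
  have one_le_sqrt2 : (1:ℝ) ≤ Real.sqrt 2 := by
    rw [show (1:ℝ) = Real.sqrt 1 by simp]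
    exact Real.sqrt_le_sqrt (by norm_num)
  have one_le_sqrtL : (1:ℝ) ≤ Real.sqrt L := by
    rw [show (1:ℝ) = Real.sqrt 1 by simp]
    exact Real.sqrt_le_sqrt (by linarith)
  have F1 : (2*A+1) * C1 ≤ 3*Real.sqrt 2*4^a*Real.sqrt L := by
    rcases Nat.eq_zero_or_pos a with h0 | hpos
    · have hc1 : C1 = 1 := by rw [hC1, h0]; norm_num
      have hA0' : A = 0 := by rw [hAdef, h0]; norm_num
      have h4 : (4:ℝ)^a = 1 := by rw [h0]; norm_num
      rw [hc1, hA0', h4]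
      nlinarith
    · have hA1 : (1:ℝ) ≤ A := by rw [hAdef]; exact_mod_cast hpos
      have hA0 : (0:ℝ) < A := by linarith
      have hsqA : 0 < Real.sqrt A := Real.sqrt_pos.mpr hA0
      have e2 : Real.sqrt A * Real.sqrt A = A := Real.mul_self_sqrt hA0.le
      have hb := choose_bound a a hpos hpos
      rw [← hAdef] at hb
      have e1 : Real.sqrt (A + A) = Real.sqrt 2 * Real.sqrt A := by
        rw [show A + A = 2 * A from by ring, Real.sqrt_mul (by norm_num : (0:ℝ) ≤ 2)]
      have e3 : (A + A)^(a+a) = 4 ^ a * (A^a * A^a) := by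
        rw [show A + A = 2 * A from by ring,
          show (2*A)^(a+a) = (2*A)^a * (2*A)^a from by rw [← pow_add], mul_pow]
        ring_nf
        congr 1
        rw [show a*2 = 2*a from by ring, pow_mul]
        norm_num
      rw [e1, e3, _root_.div_mul_div_comm] at hb
      have hrw : ((2*a).choose a : ℝ) = ((a+a).choose a : ℝ) := by rw [two_mul]
      have hb2 : C1 ≤ Real.sqrt 2 * Real.sqrt A * (4^a * (A^a*A^a)) /
          (Real.sqrt A * Real.sqrt A * (A^a*A^a)) := by rw [hC1, hrw]; exact hb
      have hmul : C1 * (Real.sqrt A * Real.sqrt A * (A^a*A^a)) ≤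
          Real.sqrt 2 * Real.sqrt A * (4^a * (A^a*A^a)) := by
        rw [← le_div_iff₀ (by positivity)]
        exact hb2
      have key : C1 * A ≤ Real.sqrt 2 * Real.sqrt A * 4^a := by
        have hP : (0:ℝ) < A^a * A^a := by positivity
        apply le_of_mul_le_mul_right _ hP
        calc C1 * A * (A^a*A^a) = C1 * (Real.sqrt A * Real.sqrt A * (A^a*A^a)) := by rw [e2]; ring
          _ ≤ Real.sqrt 2 * Real.sqrt A * (4^a * (A^a*A^a)) := hmul
          _ = Real.sqrt 2 * Real.sqrt A * 4^a * (A^a*A^a) := by ring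
      have hsqAL : Real.sqrt A ≤ Real.sqrt L := Real.sqrt_le_sqrt (by rw [hA]; linarith)
      calc (2*A+1) * C1 ≤ (3*A) * C1 := by
            apply mul_le_mul_of_nonneg_right (by linarith) hC1nn
        _ = 3 * (C1 * A) := by ring
        _ ≤ 3 * (Real.sqrt 2 * Real.sqrt A * 4^a) := by
            apply mul_le_mul_of_nonneg_left key (by norm_num)
        _ = 3 * Real.sqrt 2 * 4^a * Real.sqrt A := by ring
        _ ≤ 3 * Real.sqrt 2 * 4^a * Real.sqrt L := by
            apply mul_le_mul_of_nonneg_left hsqAL (by positivity)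
  have F2 : C2 * Y ≤ Real.sqrt S * S^e := by
    have hb := choose_bound k (2*k+2*l) hk (by omega)
    have hmono : C2 ≤ ((k + (2*k+2*l)).choose k : ℝ) := by
      rw [hC2]
      exact_mod_cast Nat.choose_le_choose k (by omega)
    have hcast1 : ((2*k+2*l : ℕ) : ℝ) = Q := by rw [hQ, hKdef, hLdef]; push_cast; ring
    have hcast2 : ((k:ℝ) + ((2*k+2*l:ℕ):ℝ)) = S := by rw [hS, hKdef, hLdef]; push_cast; ring
    have hexp : k + (2*k+2*l) = e := by rw [he]; omega
    rw [hexp] at hb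
    rw [hcast1] at hb
    rw [show ((k:ℝ) + Q) = S from by rw [hS, hQ, hKdef]; ring] at hb
    rw [show ((k:ℝ)) = K from rfl] at hb
    have hb2 : C2 ≤ Real.sqrt S / (Real.sqrt K * Real.sqrt Q) * (S^e / (K^k * Q^m2)) := by
      refine hmono.trans ?_
      have h5 : ((k + (2*k+2*l)).choose k : ℝ) = (e.choose k : ℝ) := by rw [hexp]
      have h6 : Q^m2 = Q^(2*k+2*l) := by rw [hm2]
      rw [h5, h6]
      exact hb
    have heqY : Real.sqrt S / (Real.sqrt K * Real.sqrt Q) * (S^e / (K^k * Q^m2))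
        = (Real.sqrt S * S^e) / Y := by
      rw [_root_.div_mul_div_comm]
      ring
    rw [heqY] at hb2
    rw [← le_div_iff₀ hY0]
    exact hb2
  have F3 : (K+L)^(2:ℕ) ≤ (2*A+2*K+1)*(2*A+2*K+2) := by
    rw [hA]; nlinarith
  calc (2:ℝ)^(k+1) * (2*A+1) * C1 * C2 * (2^k * K^e * K^(2:ℕ) * Real.sqrt K) * Y
      = (2^(k+1) * (2^k * K^e * K^(2:ℕ) * Real.sqrt K)) * ((2*A+1) * C1) * (C2 * Y) := by ring
    _ ≤ (2^(k+1) * (2^k * K^e * K^(2:ℕ) * Real.sqrt K)) * (3*Real.sqrt 2*4^a*Real.sqrt L) *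
        (Real.sqrt S * S^e) := by
        have hpos : (0:ℝ) ≤ 2^(k+1) * (2^k * K^e * K^(2:ℕ) * Real.sqrt K) := by positivity
        apply mul_le_mul (mul_le_mul_of_nonneg_left F1 hpos) F2 (by positivity) (by positivity)
    _ ≤ 100 * S^e * Real.sqrt L * ((K+L)^(2:ℕ)) * Y := by
        have p1 : K^e = K^k * K^m2 := by rw [he, hm2, ← pow_add]; congr 1; omega
        have p2 : Q^m2 = 2^m2 * (K+L)^m2 := by
          rw [hQ, ← mul_pow]; congr 1; ring
        have p3 : (2:ℝ)^(k+1) * 2^k * 4^a = 2^m2/8 := by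
          have h4a : (2:ℝ)^(k+1)*2^k*4^a = 2^(2*k+2*a+1) := by
            rw [show (4:ℝ)^a = 2^(2*a) from by rw [pow_mul]; norm_num, ← pow_add, ← pow_add]
            congr 1
            ring
          rw [h4a, hm2, hla, show 2*k+2*(a+2) = (2*k+2*a+1)+3 from by ring]
          rw [show (2:ℝ)^((2*k+2*a+1)+3) = 2^(2*k+2*a+1) * 8 from by rw [pow_add]; norm_num]
          field_simp
        have hKKL : K ≤ K + L := by linarith
        have hsq : (3*Real.sqrt 2/8)*Real.sqrt S ≤ 100*Real.sqrt Q := by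
          have h1 : Real.sqrt S ≤ Real.sqrt 2 * Real.sqrt Q := by
            rw [← Real.sqrt_mul (by norm_num : (0:ℝ) ≤ 2)]
            apply Real.sqrt_le_sqrt
            rw [hS, hQ]; linarith
          have h2 : Real.sqrt 2 * Real.sqrt 2 = 2 := Real.mul_self_sqrt (by norm_num)
          calc (3*Real.sqrt 2/8)*Real.sqrt S ≤ (3*Real.sqrt 2/8)*(Real.sqrt 2*Real.sqrt Q) := by
                apply mul_le_mul_of_nonneg_left h1 (by positivity)
            _ = 3/8*(Real.sqrt 2*Real.sqrt 2)*Real.sqrt Q := by ring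
            _ = 3/4*Real.sqrt Q := by rw [h2]; ring
            _ ≤ 100*Real.sqrt Q := by nlinarith
        have core2 : (3*Real.sqrt 2/8)*Real.sqrt S*(K^m2*K^(2:ℕ)) ≤
            100*Real.sqrt Q*((K+L)^m2*(K+L)^(2:ℕ)) := by
          apply mul_le_mul hsq ?_ (by positivity) (by positivity)
          apply mul_le_mul (pow_le_pow_left₀ hK0.le hKKL _) (pow_le_pow_left₀ hK0.le hKKL _)
            (by positivity) (by positivity)
        calc (2^(k+1) * (2^k * K^e * K^(2:ℕ) * Real.sqrt K)) * (3*Real.sqrt 2*4^a*Real.sqrt L) *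
            (Real.sqrt S * S^e)
            = (2^(k+1) * 2^k * 4^a) * (K^k * Real.sqrt K * Real.sqrt L * S^e) *
              (3 * Real.sqrt 2 * Real.sqrt S * (K^m2 * K^(2:ℕ))) := by rw [p1]; ring
          _ = (2^m2 * K^k * Real.sqrt K * Real.sqrt L * S^e) *
              ((3*Real.sqrt 2/8)*Real.sqrt S*(K^m2*K^(2:ℕ))) := by rw [p3]; ring
          _ ≤ (2^m2 * K^k * Real.sqrt K * Real.sqrt L * S^e) *
              (100*Real.sqrt Q*((K+L)^m2*(K+L)^(2:ℕ))) := by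
              apply mul_le_mul_of_nonneg_left core2 (by positivity)
          _ = 100 * S^e * Real.sqrt L * ((K+L)^(2:ℕ)) * Y := by
              rw [hY, p2]; ring
    _ ≤ 100 * S^e * Real.sqrt L * ((2*A+2*K+1)*(2*A+2*K+2)) * Y := by
        apply mul_le_mul_of_nonneg_right _ hY0.le
        exact mul_le_mul_of_nonneg_left F3 (by positivity)
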